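/- With D diagonal positive definite and F_ij = E_ij + E_ji (i ≤ j), the Kubo-Mori inner products are: G_D(F_ij, F_kl) = 0 if (i,j) ≠ (k,l) (with i≤j, k≤l); G_D(F_ij, F_ij) = 2 m_ij for i < j; and G_D(F_ii, F_ii) = 4 m_ii = 4/λ_i. -/

import Mathlib

open MeasureTheory Matrix

lemma km_trace_std (n : ℕ) (i p : Fin n) (c : ℝ) :
    Matrix.trace (single i p c) = if i = p then c else 0 := by
  simp [Matrix.trace, Matrix.diag, Matrix.single, ite_and, eq_comm]

lemma km_trace_std_mul (n : ℕ) (i j k p : Fin n) (c e : ℝ) :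
    Matrix.trace (single i j c * single k p e)
      = if j = k ∧ i = p then c * e else 0 := by
  by_cases h : j = k
  · subst h
    rw [Matrix.single_mul_single_same, km_trace_std]
    simp
  · rw [Matrix.single_mul_single_of_ne (h := h)]
    simp [h]

lemma km_diag_mul_std (n : ℕ) (d : Fin n → ℝ) (i j : Fin n) (c : ℝ) :
    Matrix.diagonal d * single i j c = single i j (d i * c) := by
  ext a b
  simp only [Matrix.mul_apply, Matrix.diagonal_apply, Matrix.single,
    Matrix.of_apply, ite_and, ite_mul, zero_mul, mul_ite, mul_zero]
  split_ifs <;> simp_all [Finset.sum_ite_eq, Finset.sum_ite_eq'] <;> aesop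

lemma km_std_mul_diag (n : ℕ) (d : Fin n → ℝ) (i j : Fin n) (c : ℝ) :
    single i j c * Matrix.diagonal d = single i j (c * d j) := by
  ext a b
  simp only [Matrix.mul_apply, Matrix.diagonal_apply, Matrix.single,
    Matrix.of_apply, ite_and, ite_mul, zero_mul, mul_ite, mul_zero]
  split_ifs <;> simp_all [Finset.sum_ite_eq, Finset.sum_ite_eq'] <;> aesop

lemma km_trace_key (n : ℕ) (d : Fin n → ℝ) (i j k p : Fin n) :
    Matrix.trace (Matrix.diagonal d * (single i j 1 + single j i 1)
      * Matrix.diagonal d * (single k p 1 + single p k 1)) =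
    (2 * if i = k ∧ j = p then d i * d j else 0)
      + (2 * if i = p ∧ j = k then d i * d j else 0) := by
  simp only [Matrix.mul_add, Matrix.add_mul, km_diag_mul_std, km_std_mul_diag,
    Matrix.trace_add, km_trace_std_mul, mul_one, one_mul]
  have e1 : (if j = k ∧ i = p then d i * d j else 0)
      = (if i = p ∧ j = k then d i * d j else 0) := if_congr and_comm rfl rfl
  have e2 : (if j = p ∧ i = k then d i * d j else 0)
      = (if i = k ∧ j = p then d i * d j else 0) := if_congr and_comm rfl rfl
  rw [e1, e2]
  by_cases h1 : i = k ∧ j = p <;> by_cases h2 : i = p ∧ j = k <;>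
    simp [h1, h2] <;> split_ifs <;> ring

lemma km_inv_eq (n : ℕ) (l : Fin n → ℝ) (t : ℝ) (h : ∀ i, l i + t ≠ 0) :
    (Matrix.diagonal l + t • (1 : Matrix (Fin n) (Fin n) ℝ))⁻¹
      = Matrix.diagonal fun i => (l i + t)⁻¹ := by
  have h1 : Matrix.diagonal l + t • (1 : Matrix (Fin n) (Fin n) ℝ)
      = Matrix.diagonal (fun i => l i + t) := by
    ext a b
    by_cases hab : a = b <;>
      simp [Matrix.diagonal_apply, Matrix.one_apply, Matrix.smul_apply, hab]
  rw [h1]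
  apply Matrix.inv_eq_right_inv
  rw [Matrix.diagonal_mul_diagonal]
  have h2 : (fun i => (l i + t) * (l i + t)⁻¹) = fun _ : Fin n => (1:ℝ) :=
    funext fun i => mul_inv_cancel₀ (h i)
  rw [h2, Matrix.diagonal_one]

lemma km_integral_sq (a : ℝ) (ha : 0 < a) :
    ∫ t in Set.Ioi (0:ℝ), (a + t)⁻¹ * (a + t)⁻¹ = 1 / a := by
  have hne : ∀ x : ℝ, x ∈ Set.Ici (0:ℝ) → a + x ≠ 0 := fun x hx =>
    ne_of_gt (by have : (0:ℝ) ≤ x := hx; linarith)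
  have hderiv : ∀ x ∈ Set.Ici (0:ℝ),
      HasDerivAt (fun y : ℝ => -(a + y)⁻¹) ((a + x)⁻¹ * (a + x)⁻¹) x := by
    intro x hx
    have h1 : HasDerivAt (fun y : ℝ => a + y) 1 x := (hasDerivAt_id x).const_add a
    have h2 := (h1.inv (hne x hx)).neg
    have h3 : (a + x)⁻¹ * (a + x)⁻¹ = -(-1 / (a + x) ^ 2) := by
      rw [neg_div, neg_neg, one_div, sq, mul_inv]
    rw [h3]
    exact h2
  have htend : Filter.Tendsto (fun y : ℝ => -(a + y)⁻¹) Filter.atTop (nhds 0) := by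
    have h3 : Filter.Tendsto (fun y : ℝ => a + y) Filter.atTop Filter.atTop :=
      Filter.tendsto_atTop_add_const_left _ a Filter.tendsto_id
    have := h3.inv_tendsto_atTop.neg
    simpa using this
  have key := integral_Ioi_of_hasDerivAt_of_nonneg' hderiv
    (fun x hx => mul_nonneg (inv_nonneg.2 (le_of_lt (by have : (0:ℝ) < x := hx; linarith)))
      (inv_nonneg.2 (le_of_lt (by have : (0:ℝ) < x := hx; linarith)))) htend
  rw [key]
  simp [one_div]

/-- With `D` diagonal positive definite and `F_ij = E_ij + E_ji` (`i ≤ j`), the Kubo-Mori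
inner products are: `G_D(F_ij, F_kl) = 0` for `(i,j) ≠ (k,l)`; `G_D(F_ij, F_ij) = 2 m_ij`
for `i < j`; and `G_D(F_ii, F_ii) = 4 m_ii = 4/λ_i`. -/
theorem kubo_mori_on_symmetrized_units (n : ℕ) (l : Fin n → ℝ) (hl : ∀ i, 0 < l i) :
    let D : Matrix (Fin n) (Fin n) ℝ := Matrix.diagonal l
    let F : Fin n → Fin n → Matrix (Fin n) (Fin n) ℝ := fun i j =>
      Matrix.single i j 1 + Matrix.single j i 1
    let G : Matrix (Fin n) (Fin n) ℝ → Matrix (Fin n) (Fin n) ℝ → ℝ := fun X Y =>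
      ∫ t in Set.Ioi (0:ℝ), Matrix.trace ((D + t • 1)⁻¹ * X * (D + t • 1)⁻¹ * Y)
    let m : Fin n → Fin n → ℝ := fun i j =>
      ∫ t in Set.Ioi (0:ℝ), (l i + t)⁻¹ * (l j + t)⁻¹
    (∀ i j k p : Fin n, i ≤ j → k ≤ p → (i, j) ≠ (k, p) → G (F i j) (F k p) = 0) ∧
    (∀ i j : Fin n, i < j → G (F i j) (F i j) = 2 * m i j) ∧
    (∀ i : Fin n, G (F i i) (F i i) = 4 * m i i ∧ m i i = 1 / l i) := by
  intro D F G m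
  have hinv : ∀ t : ℝ, t ∈ Set.Ioi (0:ℝ) →
      (D + t • 1)⁻¹ = Matrix.diagonal fun i => (l i + t)⁻¹ := by
    intro t ht
    exact km_inv_eq n l t fun i => ne_of_gt (by have := hl i; have : (0:ℝ) < t := ht; linarith [hl i])
  refine ⟨?_, ?_, ?_⟩
  · intro i j k p hij hkp hne
    have heq : Set.EqOn
        (fun t : ℝ => Matrix.trace ((D + t • 1)⁻¹ * F i j * (D + t • 1)⁻¹ * F k p))
        (fun _ : ℝ => (0:ℝ)) (Set.Ioi 0) := by
      intro t ht
      simp only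
      rw [hinv t ht, km_trace_key]
      have c1 : ¬(i = k ∧ j = p) := by
        rintro ⟨rfl, rfl⟩; exact hne rfl
      have c2 : ¬(i = p ∧ j = k) := by
        rintro ⟨rfl, rfl⟩
        have : i = j := le_antisymm hij hkp
        subst this
        exact hne rfl
      simp [c1, c2]
    show (∫ t in Set.Ioi (0:ℝ),
        Matrix.trace ((D + t • 1)⁻¹ * F i j * (D + t • 1)⁻¹ * F k p)) = 0
    rw [setIntegral_congr_fun measurableSet_Ioi heq]
    simp
  · intro i j hij
    have heq : Set.EqOn
        (fun t : ℝ => Matrix.trace ((D + t • 1)⁻¹ * F i j * (D + t • 1)⁻¹ * F i j))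
        (fun t : ℝ => 2 * ((l i + t)⁻¹ * (l j + t)⁻¹)) (Set.Ioi 0) := by
      intro t ht
      simp only
      rw [hinv t ht, km_trace_key]
      have c2 : ¬(i = j ∧ j = i) := by
        rintro ⟨rfl, -⟩; exact lt_irrefl i hij
      simp [c2]
    show (∫ t in Set.Ioi (0:ℝ),
        Matrix.trace ((D + t • 1)⁻¹ * F i j * (D + t • 1)⁻¹ * F i j)) = 2 * m i j
    rw [setIntegral_congr_fun measurableSet_Ioi heq, MeasureTheory.integral_const_mul]
  · intro i
    constructor
    · have heq : Set.EqOn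
          (fun t : ℝ => Matrix.trace ((D + t • 1)⁻¹ * F i i * (D + t • 1)⁻¹ * F i i))
          (fun t : ℝ => 4 * ((l i + t)⁻¹ * (l i + t)⁻¹)) (Set.Ioi 0) := by
        intro t ht
        simp only
        rw [hinv t ht, km_trace_key]
        simp
        ring
      show (∫ t in Set.Ioi (0:ℝ),
          Matrix.trace ((D + t • 1)⁻¹ * F i i * (D + t • 1)⁻¹ * F i i)) = 4 * m i i
      rw [setIntegral_congr_fun measurableSet_Ioi heq, MeasureTheory.integral_const_mul]
    · exact km_integral_sq (l i) (hl i)
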